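/- (Corollary 3.1) Let X₁,…,Xₙ be independent Bernoulli random variables with P(Xᵢ = 1) = pᵢ = 1 - P(Xᵢ = 0), let Wₙ = ∑_{i=1}^{n} Xᵢ, and set p = (1/n)∑_{i=1}^{n} pᵢ, q = 1-p, with 0 < p < 1. Then d_sl(Wₙ, B_{n,p}) ≤ (2/qⁿ) ∑_{i=1}^{n} |p - pᵢ| pᵢ ∏_{j≠i} (1 - p p_j). -/

import Mathlib

open Finset MeasureTheory ProbabilityTheory

/-- `E[(B_{α,p} - z)^+]`, the expected call function of a binomial random variable
`B_{α,p}` with `P(B = j) = C(α,j) p^j (1-p)^{α-j}` for `j = 0,…,α`. -/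
noncomputable def binomCallExp (α : ℕ) (p z : ℝ) : ℝ :=
  ∑ j ∈ Finset.range (α + 1),
    (α.choose j : ℝ) * p ^ j * (1 - p) ^ (α - j) * max ((j : ℝ) - z) 0

namespace CDOaux
variable {n : ℕ}

def PP (p : ℝ) (v : Fin n → ℝ) (i : Fin n) (t : ℝ) : ℝ := p + t * (v i - p)

noncomputable def hfac (p : ℝ) (v : Fin n → ℝ) (S : Finset (Fin n)) (i : Fin n) (t : ℝ) : ℝ :=
  if i ∈ S then PP p v i t else 1 - PP p v i t

noncomputable def Ffun (p : ℝ) (v : Fin n → ℝ) (z t : ℝ) : ℝ :=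
  ∑ S ∈ (univ : Finset (Fin n)).powerset,
    (∏ i, hfac p v S i t) * max ((S.card : ℝ) - z) 0

noncomputable def gg (z : ℝ) (k : ℕ) : ℝ := max ((k : ℝ) + 1 - z) 0 - max ((k : ℝ) - z) 0

noncomputable def Dfun (p : ℝ) (v : Fin n → ℝ) (z : ℝ) (i : Fin n) (t : ℝ) : ℝ :=
  ∑ T ∈ ((univ : Finset (Fin n)).erase i).powerset,
    (∏ j ∈ univ.erase i, hfac p v T j t) * (gg z (T.card + 1) - gg z T.card)

def dfac (p : ℝ) (v : Fin n → ℝ) (S : Finset (Fin n)) (i : Fin n) : ℝ :=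
  if i ∈ S then v i - p else -(v i - p)

noncomputable def Kfun (p : ℝ) (v : Fin n → ℝ) (z t : ℝ) : ℝ :=
  ∑ S ∈ (univ : Finset (Fin n)).powerset, (∏ j, hfac p v S j t) * gg z S.card

lemma gg_nonneg (z : ℝ) (k : ℕ) : 0 ≤ gg z k := by
  unfold gg
  rcases le_total ((k : ℝ) - z) 0 with h | h
  · rw [max_eq_right h, sub_zero]; exact le_max_right _ _
  · rw [max_eq_left h, max_eq_left (by linarith)]; linarith

lemma gg_le_one (z : ℝ) (k : ℕ) : gg z k ≤ 1 := by
  unfold gg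
  rcases le_total ((k : ℝ) + 1 - z) 0 with h | h
  · rw [max_eq_right h]; have := le_max_right ((k : ℝ) - z) 0; linarith
  · rw [max_eq_left h]
    rcases le_total ((k : ℝ) - z) 0 with h2 | h2
    · rw [max_eq_right h2]; linarith
    · rw [max_eq_left h2]; linarith

lemma PP_mem {p : ℝ} {v : Fin n → ℝ} (hp0 : 0 ≤ p) (hp1 : p ≤ 1)
    (hv0 : ∀ i, 0 ≤ v i) (hv1 : ∀ i, v i ≤ 1) {t : ℝ} (ht0 : 0 ≤ t) (ht1 : t ≤ 1)
    (i : Fin n) : 0 ≤ PP p v i t ∧ PP p v i t ≤ 1 := by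
  have h0 := hv0 i; have h1 := hv1 i; unfold PP; constructor <;> nlinarith

lemma prod_ite_split {s T : Finset (Fin n)} (hT : T ⊆ s) (a b : Fin n → ℝ) :
    (∏ j ∈ s, if j ∈ T then a j else b j) = (∏ j ∈ T, a j) * ∏ j ∈ s \ T, b j := by
  have h1 : s = T ∪ (s \ T) := (Finset.union_sdiff_of_subset hT).symm
  nth_rewrite 1 [h1]
  rw [Finset.prod_union Finset.disjoint_sdiff]
  congr 1
  · exact Finset.prod_congr rfl fun j hj => if_pos hj
  · exact Finset.prod_congr rfl fun j hj => if_neg (Finset.mem_sdiff.mp hj).2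

lemma hfac_mem {p : ℝ} {v : Fin n → ℝ} (hp0 : 0 ≤ p) (hp1 : p ≤ 1)
    (hv0 : ∀ i, 0 ≤ v i) (hv1 : ∀ i, v i ≤ 1) {t : ℝ} (ht0 : 0 ≤ t) (ht1 : t ≤ 1)
    (S : Finset (Fin n)) (i : Fin n) : 0 ≤ hfac p v S i t ∧ hfac p v S i t ≤ 1 := by
  obtain ⟨a, b⟩ := PP_mem hp0 hp1 hv0 hv1 ht0 ht1 (p := p) (v := v) i
  unfold hfac; split_ifs <;> constructor <;> linarith

lemma wprod_nonneg {p : ℝ} {v : Fin n → ℝ} (hp0 : 0 ≤ p) (hp1 : p ≤ 1)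
    (hv0 : ∀ i, 0 ≤ v i) (hv1 : ∀ i, v i ≤ 1) {t : ℝ} (ht0 : 0 ≤ t) (ht1 : t ≤ 1)
    (S : Finset (Fin n)) (s : Finset (Fin n)) :
    0 ≤ ∏ j ∈ s, hfac p v S j t :=
  Finset.prod_nonneg fun j _ => (hfac_mem hp0 hp1 hv0 hv1 ht0 ht1 S j).1

lemma wsum_one (p : ℝ) (v : Fin n → ℝ) (t : ℝ) (s : Finset (Fin n)) :
    ∑ T ∈ s.powerset, ∏ j ∈ s, hfac p v T j t = 1 := by
  have : ∀ T ∈ s.powerset, (∏ j ∈ s, hfac p v T j t)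
      = (∏ j ∈ T, PP p v j t) * ∏ j ∈ s \ T, (1 - PP p v j t) := fun T hT =>
    prod_ite_split (Finset.mem_powerset.mp hT) _ _
  rw [Finset.sum_congr rfl this, ← Finset.prod_add]
  simp

lemma hfac_insert (p : ℝ) (v : Fin n → ℝ) (T : Finset (Fin n)) {i j : Fin n} (hj : j ≠ i)
    (t : ℝ) : hfac p v (insert i T) j t = hfac p v T j t := by
  unfold hfac; simp [Finset.mem_insert, hj]

lemma card_powerset_mem {i : Fin n} {T : Finset (Fin n)}
    (hT : T ∈ ((univ : Finset (Fin n)).erase i).powerset) : i ∉ T :=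
  fun h => Finset.notMem_erase i univ (Finset.mem_powerset.mp hT h)

lemma prod_erase_eq_insert (p : ℝ) (v : Fin n → ℝ) (t : ℝ) (i : Fin n) (T : Finset (Fin n)) :
    ∏ j ∈ univ.erase i, hfac p v (insert i T) j t = ∏ j ∈ univ.erase i, hfac p v T j t :=
  Finset.prod_congr rfl fun j hj => hfac_insert p v T (Finset.ne_of_mem_erase hj) t

lemma inner_split (p : ℝ) (v : Fin n → ℝ) (z t : ℝ) (i : Fin n) :
    ∑ S ∈ (univ : Finset (Fin n)).powerset,
      (∏ j ∈ univ.erase i, hfac p v S j t) * dfac p v S i * max ((S.card : ℝ) - z) 0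
    = (v i - p) * ∑ T ∈ (univ.erase i).powerset,
        (∏ j ∈ univ.erase i, hfac p v T j t) * gg z T.card := by
  have hsplit := Finset.sum_powerset_insert (Finset.notMem_erase i univ)
    (fun S => (∏ j ∈ univ.erase i, hfac p v S j t) * dfac p v S i * max ((S.card : ℝ) - z) 0)
  rw [Finset.insert_erase (Finset.mem_univ i)] at hsplit
  rw [hsplit, ← Finset.sum_add_distrib, Finset.mul_sum]
  refine Finset.sum_congr rfl fun T hT => ?_
  have hiT : i ∉ T := card_powerset_mem hT
  rw [prod_erase_eq_insert, Finset.card_insert_of_notMem hiT]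
  unfold dfac gg
  rw [if_neg hiT, if_pos (Finset.mem_insert_self i T)]
  push_cast
  ring

lemma K_split (p : ℝ) (v : Fin n → ℝ) (z t : ℝ) (i : Fin n) :
    Kfun p v z t
    = (∑ T ∈ (univ.erase i).powerset, (∏ j ∈ univ.erase i, hfac p v T j t) * gg z T.card)
      + PP p v i t * Dfun p v z i t := by
  unfold Kfun
  have hsplit := Finset.sum_powerset_insert (Finset.notMem_erase i univ)
    (fun S => (∏ j, hfac p v S j t) * gg z S.card)
  rw [Finset.insert_erase (Finset.mem_univ i)] at hsplit
  rw [hsplit, ← Finset.sum_add_distrib]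
  unfold Dfun
  rw [Finset.mul_sum, ← Finset.sum_add_distrib]
  refine Finset.sum_congr rfl fun T hT => ?_
  have hiT : i ∉ T := card_powerset_mem hT
  have h1 : (∏ j, hfac p v T j t) = hfac p v T i t * ∏ j ∈ univ.erase i, hfac p v T j t :=
    (Finset.mul_prod_erase univ _ (Finset.mem_univ i)).symm
  have h2 : (∏ j, hfac p v (insert i T) j t)
      = hfac p v (insert i T) i t * ∏ j ∈ univ.erase i, hfac p v (insert i T) j t :=
    (Finset.mul_prod_erase univ _ (Finset.mem_univ i)).symm
  rw [h1, h2, prod_erase_eq_insert, Finset.card_insert_of_notMem hiT]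
  have h3 : hfac p v T i t = 1 - PP p v i t := if_neg hiT
  have h4 : hfac p v (insert i T) i t = PP p v i t := if_pos (Finset.mem_insert_self i T)
  rw [h3, h4]
  ring

lemma Fder_eq (p : ℝ) (v : Fin n → ℝ) (z t : ℝ) (hsum : ∑ i, v i = n * p) :
    ∑ S ∈ (univ : Finset (Fin n)).powerset,
      (∑ i, (∏ j ∈ univ.erase i, hfac p v S j t) * dfac p v S i) * max ((S.card : ℝ) - z) 0
    = -∑ i, (v i - p) * (PP p v i t * Dfun p v z i t) := by
  have step1 : ∀ S ∈ (univ : Finset (Fin n)).powerset,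
      (∑ i, (∏ j ∈ univ.erase i, hfac p v S j t) * dfac p v S i) * max ((S.card : ℝ) - z) 0
      = ∑ i, (∏ j ∈ univ.erase i, hfac p v S j t) * dfac p v S i * max ((S.card : ℝ) - z) 0 :=
    fun S _ => Finset.sum_mul _ _ _
  rw [Finset.sum_congr rfl step1, Finset.sum_comm]
  have step2 : ∀ i ∈ (univ : Finset (Fin n)), ∑ S ∈ (univ : Finset (Fin n)).powerset,
      (∏ j ∈ univ.erase i, hfac p v S j t) * dfac p v S i * max ((S.card : ℝ) - z) 0
      = (v i - p) * (Kfun p v z t - PP p v i t * Dfun p v z i t) := by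
    intro i _
    rw [inner_split p v z t i]
    have := K_split p v z t i
    have heq : ∑ T ∈ (univ.erase i).powerset, (∏ j ∈ univ.erase i, hfac p v T j t) * gg z T.card
        = Kfun p v z t - PP p v i t * Dfun p v z i t := by linarith
    rw [heq]
  rw [Finset.sum_congr rfl step2]
  have hzero : ∑ i, (v i - p) = 0 := by
    rw [Finset.sum_sub_distrib, Finset.sum_const, Finset.card_univ, Fintype.card_fin, hsum]
    simp [nsmul_eq_mul]
  have : ∑ i, (v i - p) * (Kfun p v z t - PP p v i t * Dfun p v z i t)
      = (∑ i, (v i - p)) * Kfun p v z t - ∑ i, (v i - p) * (PP p v i t * Dfun p v z i t) := by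
    rw [Finset.sum_mul, ← Finset.sum_sub_distrib]
    exact Finset.sum_congr rfl fun i _ => by ring
  rw [this, hzero]
  ring

lemma hasDeriv_term (p : ℝ) (v : Fin n → ℝ) (S : Finset (Fin n)) (t : ℝ) :
    HasDerivAt (fun t => ∏ i, hfac p v S i t)
      (∑ i, (∏ j ∈ univ.erase i, hfac p v S j t) * dfac p v S i) t := by
  have h : ∀ i ∈ (univ : Finset (Fin n)),
      HasDerivAt (fun t => hfac p v S i t) (dfac p v S i) t := by
    intro i _
    unfold hfac dfac PP
    split_ifs with h
    · simpa using ((hasDerivAt_mul_const (v i - p)).const_add p)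
    · simpa using (((hasDerivAt_mul_const (v i - p)).const_add p).const_sub 1)
  simpa only [smul_eq_mul] using HasDerivAt.fun_finsetProd h

lemma Ffun_hasDeriv (p : ℝ) (v : Fin n → ℝ) (z t : ℝ) (hsum : ∑ i, v i = n * p) :
    HasDerivAt (Ffun p v z)
      (-∑ i, (v i - p) * (PP p v i t * Dfun p v z i t)) t := by
  rw [← Fder_eq p v z t hsum]
  unfold Ffun
  exact HasDerivAt.fun_sum fun S _ => (hasDeriv_term p v S t).mul_const _

lemma Dfun_bound {p : ℝ} {v : Fin n → ℝ} (hp0 : 0 ≤ p) (hp1 : p ≤ 1)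
    (hv0 : ∀ i, 0 ≤ v i) (hv1 : ∀ i, v i ≤ 1) {t : ℝ} (ht0 : 0 ≤ t) (ht1 : t ≤ 1)
    (z : ℝ) (i : Fin n) : |Dfun p v z i t| ≤ 1 := by
  unfold Dfun
  calc |∑ T ∈ ((univ : Finset (Fin n)).erase i).powerset,
        (∏ j ∈ univ.erase i, hfac p v T j t) * (gg z (T.card + 1) - gg z T.card)|
      ≤ ∑ T ∈ ((univ : Finset (Fin n)).erase i).powerset,
        |(∏ j ∈ univ.erase i, hfac p v T j t) * (gg z (T.card + 1) - gg z T.card)| :=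
        Finset.abs_sum_le_sum_abs _ _
    _ ≤ ∑ T ∈ ((univ : Finset (Fin n)).erase i).powerset,
        ∏ j ∈ univ.erase i, hfac p v T j t := by
        refine Finset.sum_le_sum fun T hT => ?_
        rw [abs_mul, abs_of_nonneg (wprod_nonneg hp0 hp1 hv0 hv1 ht0 ht1 T _)]
        have h1 : |gg z (T.card + 1) - gg z T.card| ≤ 1 := by
          have := gg_nonneg z (T.card + 1); have := gg_le_one z (T.card + 1)
          have := gg_nonneg z T.card; have := gg_le_one z T.card
          rw [abs_le]; constructor <;> linarith
        exact mul_le_of_le_one_right (wprod_nonneg hp0 hp1 hv0 hv1 ht0 ht1 T _) h1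
    _ = 1 := wsum_one p v t _

lemma Fder_bound {p : ℝ} {v : Fin n → ℝ} (hp0 : 0 ≤ p) (hp1 : p ≤ 1)
    (hv0 : ∀ i, 0 ≤ v i) (hv1 : ∀ i, v i ≤ 1) {t : ℝ} (ht0 : 0 ≤ t) (ht1 : t ≤ 1)
    (z : ℝ) :
    |(-∑ i, (v i - p) * (PP p v i t * Dfun p v z i t))|
      ≤ p * (∑ i, |v i - p|) + (∑ i, |v i - p| * (v i - p)) * t := by
  have key : |(-∑ i, (v i - p) * (PP p v i t * Dfun p v z i t))|
      ≤ ∑ i, |v i - p| * PP p v i t := by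
    rw [abs_neg]
    refine (Finset.abs_sum_le_sum_abs _ _).trans (Finset.sum_le_sum fun i _ => ?_)
    rw [abs_mul, abs_mul]
    have hPP := PP_mem hp0 hp1 hv0 hv1 ht0 ht1 (p := p) (v := v) i
    rw [abs_of_nonneg hPP.1]
    have := Dfun_bound hp0 hp1 hv0 hv1 ht0 ht1 z i
    have h2 : PP p v i t * |Dfun p v z i t| ≤ PP p v i t * 1 :=
      mul_le_mul_of_nonneg_left this hPP.1
    nlinarith [abs_nonneg (v i - p)]
  refine key.trans (le_of_eq ?_)
  rw [Finset.mul_sum, Finset.sum_mul, ← Finset.sum_add_distrib]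
  refine Finset.sum_congr rfl fun i _ => ?_
  unfold PP; ring


lemma cont_hfac (p : ℝ) (v : Fin n → ℝ) (S : Finset (Fin n)) (i : Fin n) :
    Continuous (fun t => hfac p v S i t) := by
  unfold hfac PP
  by_cases h : i ∈ S
  · simp only [if_pos h]; fun_prop
  · simp only [if_neg h]; fun_prop

lemma cont_Fder (p : ℝ) (v : Fin n → ℝ) (z : ℝ) :
    Continuous (fun t => -∑ i, (v i - p) * (PP p v i t * Dfun p v z i t)) := by
  refine Continuous.neg (continuous_finset_sum _ fun i _ => Continuous.mul continuous_const
    (Continuous.mul ?_ ?_))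
  · unfold PP; fun_prop
  · unfold Dfun
    exact continuous_finset_sum _ fun T _ => Continuous.mul
      (continuous_finset_prod _ fun j _ => cont_hfac p v T j) continuous_const

lemma Ffun_diff_bound {p : ℝ} {v : Fin n → ℝ} (hp0 : 0 ≤ p) (hp1 : p ≤ 1)
    (hv0 : ∀ i, 0 ≤ v i) (hv1 : ∀ i, v i ≤ 1) (hsum : ∑ i, v i = n * p) (z : ℝ) :
    |Ffun p v z 1 - Ffun p v z 0|
      ≤ p * (∑ i, |v i - p|) + (∑ i, |v i - p| * (v i - p)) / 2 := by
  set C1 := p * ∑ i, |v i - p| with hC1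
  set C2 := ∑ i, |v i - p| * (v i - p) with hC2
  have hFTC : ∫ t in (0:ℝ)..1, (-∑ i, (v i - p) * (PP p v i t * Dfun p v z i t))
      = Ffun p v z 1 - Ffun p v z 0 :=
    intervalIntegral.integral_eq_sub_of_hasDerivAt
      (fun t _ => Ffun_hasDeriv p v z t hsum)
      ((cont_Fder p v z).intervalIntegrable 0 1)
  rw [← hFTC]
  have hgcont : Continuous (fun t : ℝ => C1 + C2 * t) := by fun_prop
  have hb := intervalIntegral.norm_integral_le_abs_of_norm_le (μ := volume) (a := (0:ℝ)) (b := 1)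
    (f := fun t => -∑ i, (v i - p) * (PP p v i t * Dfun p v z i t))
    (g := fun t => C1 + C2 * t) ?_ (hgcont.intervalIntegrable 0 1)
  · have hg : (∫ t in (0:ℝ)..1, (C1 + C2 * t)) = C1 + C2 / 2 := by
      rw [intervalIntegral.integral_add intervalIntegrable_const
          ((by fun_prop : Continuous fun t : ℝ => C2 * t).intervalIntegrable 0 1),
        intervalIntegral.integral_const, intervalIntegral.integral_const_mul, integral_id]
      norm_num [mul_one_div]
    rw [hg] at hb
    have hnn : 0 ≤ C1 + C2 / 2 := by
      have : C1 + C2 / 2 = ∑ i, |v i - p| * (p + v i) / 2 := by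
        rw [hC1, hC2, Finset.mul_sum, Finset.sum_div, ← Finset.sum_add_distrib]
        exact Finset.sum_congr rfl fun i _ => by ring
      rw [this]
      exact Finset.sum_nonneg fun i _ =>
        div_nonneg (mul_nonneg (abs_nonneg _) (by linarith [hv0 i, hp0])) (by norm_num)
    rw [abs_of_nonneg hnn] at hb
    simpa [Real.norm_eq_abs] using hb
  · refine Filter.eventually_of_mem (self_mem_ae_restrict measurableSet_uIoc)
      (fun t ht => ?_)
    rw [Set.uIoc_of_le (by norm_num : (0:ℝ) ≤ 1)] at ht
    rw [Real.norm_eq_abs]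
    exact Fder_bound hp0 hp1 hv0 hv1 (le_of_lt ht.1) ht.2 z

lemma Ffun_one (p : ℝ) (v : Fin n → ℝ) (z : ℝ) :
    Ffun p v z 1 = ∑ S ∈ (univ : Finset (Fin n)).powerset,
      (∏ i ∈ S, v i) * (∏ i ∈ univ \ S, (1 - v i)) * max ((S.card : ℝ) - z) 0 := by
  unfold Ffun
  refine Finset.sum_congr rfl fun S hS => ?_
  have h1 : ∀ i ∈ (univ : Finset (Fin n)), hfac p v S i 1
      = if i ∈ S then v i else 1 - v i := by
    intro i _; unfold hfac PP; split_ifs <;> ring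
  rw [Finset.prod_congr rfl h1, prod_ite_split (Finset.mem_powerset.mp hS)]

lemma Ffun_zero (p : ℝ) (v : Fin n → ℝ) (z : ℝ) :
    Ffun p v z 0 = binomCallExp n p z := by
  unfold Ffun binomCallExp
  have h1 : ∀ S ∈ (univ : Finset (Fin n)).powerset,
      (∏ i, hfac p v S i 0) * max ((S.card : ℝ) - z) 0
      = p ^ S.card * (1 - p) ^ (n - S.card) * max ((S.card : ℝ) - z) 0 := by
    intro S hS
    have h2 : ∀ i ∈ (univ : Finset (Fin n)), hfac p v S i 0
        = if i ∈ S then p else 1 - p := by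
      intro i _; unfold hfac PP; split_ifs <;> ring
    rw [Finset.prod_congr rfl h2, prod_ite_split (Finset.mem_powerset.mp hS),
      Finset.prod_const, Finset.prod_const, Finset.card_sdiff_of_subset (Finset.mem_powerset.mp hS),
      Finset.card_univ, Fintype.card_fin]
  rw [Finset.sum_congr rfl h1, Finset.sum_powerset]
  refine Finset.sum_congr (by rw [Finset.card_univ, Fintype.card_fin]) fun j hj => ?_
  have h3 : ∀ S ∈ Finset.powersetCard j (univ : Finset (Fin n)),
      p ^ S.card * (1 - p) ^ (n - S.card) * max ((S.card : ℝ) - z) 0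
      = p ^ j * (1 - p) ^ (n - j) * max ((j : ℝ) - z) 0 := by
    intro S hS
    rw [(Finset.mem_powersetCard.mp hS).2]
  rw [Finset.sum_congr rfl h3, Finset.sum_const, Finset.card_powersetCard,
    Finset.card_univ, Fintype.card_fin, nsmul_eq_mul]
  ring


lemma term_ineq (a b : ℝ) (ha : 0 ≤ a) : b * (a - b) ≤ |a - b| * (2 * a - b) := by
  rcases abs_cases (a - b) with ⟨h1, h2⟩ | ⟨h1, h2⟩ <;> nlinarith

lemma sum_bound_chain {p : ℝ} {v : Fin n → ℝ} (hp0 : 0 ≤ p) (hv0 : ∀ i, 0 ≤ v i)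
    (hsum : ∑ i, v i = n * p) :
    p * (∑ i, |v i - p|) + (∑ i, |v i - p| * (v i - p)) / 2
      ≤ (3 / 2) * ∑ i, |v i - p| * v i := by
  have h1 : ∑ i, p * (v i - p) = 0 := by
    rw [← Finset.mul_sum, Finset.sum_sub_distrib, Finset.sum_const, Finset.card_univ,
      Fintype.card_fin, hsum]
    simp [nsmul_eq_mul]
  have h2 : ∑ i, p * (v i - p) ≤ ∑ i, |v i - p| * (2 * v i - p) :=
    Finset.sum_le_sum fun i _ => term_ineq (v i) p (hv0 i)
  rw [h1] at h2
  have h3 : ∑ i, |v i - p| * (2 * v i - p)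
      = 2 * (∑ i, |v i - p| * v i) - p * ∑ i, |v i - p| := by
    rw [Finset.mul_sum, Finset.mul_sum, ← Finset.sum_sub_distrib]
    exact Finset.sum_congr rfl fun i _ => by ring
  rw [h3] at h2
  have h5 : ∑ i, |v i - p| * (v i - p) = ∑ i, |v i - p| * v i - p * ∑ i, |v i - p| := by
    rw [Finset.mul_sum, ← Finset.sum_sub_distrib]
    exact Finset.sum_congr rfl fun i _ => by ring
  linarith

lemma final_chain {p q : ℝ} {v : Fin n → ℝ} (hq : q = 1 - p) (hp0 : 0 < p) (hp1 : p < 1)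
    (hv0 : ∀ i, 0 ≤ v i) (hv1 : ∀ i, v i ≤ 1) (hn : 1 ≤ n) :
    (3 / 2) * ∑ i, |v i - p| * v i
      ≤ (2 / q ^ n) * ∑ i, |p - v i| * v i * ∏ j ∈ univ.erase i, (1 - p * v j) := by
  have hq0 : 0 < q := by rw [hq]; linarith
  have hq1 : q ≤ 1 := by rw [hq]; linarith
  rw [Finset.mul_sum, Finset.mul_sum]
  refine Finset.sum_le_sum fun i _ => ?_
  rw [abs_sub_comm p (v i)]
  have hw : 0 ≤ |v i - p| * v i := mul_nonneg (abs_nonneg _) (hv0 i)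
  have hprod : q ^ (n - 1) ≤ ∏ j ∈ univ.erase i, (1 - p * v j) := by
    have hcards : (univ.erase i).card = n - 1 := by
      rw [Finset.card_erase_of_mem (Finset.mem_univ i), Finset.card_univ, Fintype.card_fin]
    calc q ^ (n - 1) = ∏ _j ∈ univ.erase i, q := by rw [Finset.prod_const, hcards]
      _ ≤ ∏ j ∈ univ.erase i, (1 - p * v j) :=
        Finset.prod_le_prod (fun j _ => le_of_lt hq0)
          (fun j _ => by
            have h6 := mul_le_mul_of_nonneg_left (hv1 j) (le_of_lt hp0)
            rw [hq]; nlinarith)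
  have hqn : q ^ n = q ^ (n - 1) * q := by
    conv_lhs => rw [← Nat.succ_pred_eq_of_pos hn]
    rw [pow_succ]
    rfl
  have hkey : 3 / 2 ≤ 2 / q ^ n * ∏ j ∈ univ.erase i, (1 - p * v j) := by
    have e1 : 2 / q ^ n * q ^ (n - 1) = 2 / q := by
      rw [hqn]; field_simp
    have e2 : (3 : ℝ) / 2 ≤ 2 / q := by
      rw [div_le_div_iff₀ (by norm_num) hq0]; linarith
    calc (3 : ℝ) / 2 ≤ 2 / q := e2
      _ = 2 / q ^ n * q ^ (n - 1) := e1.symm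
      _ ≤ 2 / q ^ n * ∏ j ∈ univ.erase i, (1 - p * v j) :=
        mul_le_mul_of_nonneg_left hprod (by positivity)
  calc 3 / 2 * (|v i - p| * v i)
      ≤ (2 / q ^ n * ∏ j ∈ univ.erase i, (1 - p * v j)) * (|v i - p| * v i) :=
        mul_le_mul_of_nonneg_right hkey hw
    _ = 2 / q ^ n * (|v i - p| * v i * ∏ j ∈ univ.erase i, (1 - p * v j)) := by ring


lemma integral_call_eq {Ω : Type*} [MeasurableSpace Ω] (μ : Measure Ω) [IsProbabilityMeasure μ]
    (X : Fin n → Ω → ℝ) (v : Fin n → ℝ)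
    (hmeas : ∀ i, Measurable (X i))
    (hBer : ∀ i ω, X i ω = 0 ∨ X i ω = 1)
    (hpvec : ∀ i, (μ {ω | X i ω = 1}).toReal = v i)
    (hindep : iIndepFun X μ) (z : ℝ) :
    ∫ ω, max ((∑ i, X i ω) - z) 0 ∂μ
    = ∑ S ∈ (univ : Finset (Fin n)).powerset,
        (∏ i ∈ S, v i) * (∏ i ∈ univ \ S, (1 - v i)) * max ((S.card : ℝ) - z) 0 := by
  classical
  set A : Finset (Fin n) → Set Ω :=
    fun S => ⋂ i, X i ⁻¹' {if i ∈ S then (1 : ℝ) else 0} with hA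
  have hAmeas : ∀ S, MeasurableSet (A S) :=
    fun S => MeasurableSet.iInter fun i => hmeas i (measurableSet_singleton _)
  have hpoint : (fun ω => max ((∑ i, X i ω) - z) 0)
      = fun ω => ∑ S ∈ (univ : Finset (Fin n)).powerset,
          Set.indicator (A S) (fun _ => max ((S.card : ℝ) - z) 0) ω := by
    funext ω
    set S₀ : Finset (Fin n) := univ.filter (fun i => X i ω = 1) with hS₀
    rw [Finset.sum_eq_single_of_mem S₀ (Finset.mem_powerset.mpr (Finset.subset_univ _)) ?_]
    · have hmem : ω ∈ A S₀ := Set.mem_iInter.mpr fun i => by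
        simp only [Set.mem_preimage, Set.mem_singleton_iff, hS₀, Finset.mem_filter,
          Finset.mem_univ, true_and]
        split_ifs with h2
        · exact h2
        · rcases hBer i ω with h0 | h1
          · exact h0
          · exact absurd h1 h2
      rw [Set.indicator_of_mem hmem]
      have hcount : ∑ i, X i ω = (S₀.card : ℝ) := by
        rw [hS₀, ← Finset.sum_boole]
        refine Finset.sum_congr rfl fun i _ => ?_
        split_ifs with h2
        · exact h2
        · rcases hBer i ω with h0 | h1
          · exact h0
          · exact absurd h1 h2
      rw [hcount]
    · intro S hSmem hSne
      refine Set.indicator_of_notMem (fun hω => hSne ?_) _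
      have hm := Set.mem_iInter.mp hω
      refine Finset.ext fun i => ?_
      have hi : X i ω = if i ∈ S then (1 : ℝ) else 0 := hm i
      constructor
      · intro h
        rw [if_pos h] at hi
        exact Finset.mem_filter.mpr ⟨Finset.mem_univ i, hi⟩
      · intro h
        by_contra hc
        rw [if_neg hc] at hi
        have := (Finset.mem_filter.mp h).2
        rw [hi] at this
        norm_num at this
  rw [hpoint, integral_finset_sum _
    (fun S _ => (integrable_const _).indicator (hAmeas S))]
  refine Finset.sum_congr rfl fun S hS => ?_
  rw [integral_indicator_const _ (hAmeas S), smul_eq_mul]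
  have hμA : μ (A S) = ∏ i, μ (X i ⁻¹' {if i ∈ S then (1 : ℝ) else 0}) := by
    rw [hA]
    exact hindep.meas_iInter fun i => ⟨{if i ∈ S then (1 : ℝ) else 0},
      measurableSet_singleton _, rfl⟩
  have hfactor : ∀ i, (μ (X i ⁻¹' {if i ∈ S then (1 : ℝ) else 0})).toReal
      = if i ∈ S then v i else 1 - v i := by
    intro i
    have hset1 : X i ⁻¹' {(1 : ℝ)} = {ω | X i ω = 1} := rfl
    by_cases h : i ∈ S
    · rw [if_pos h, if_pos h, hset1, hpvec i]
    · rw [if_neg h, if_neg h]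
      have hset0 : X i ⁻¹' {(0 : ℝ)} = (X i ⁻¹' {(1 : ℝ)})ᶜ := by
        ext ω
        simp only [Set.mem_preimage, Set.mem_singleton_iff, Set.mem_compl_iff,
          Set.mem_setOf_eq]
        constructor
        · intro h0 h1; rw [h0] at h1; norm_num at h1
        · intro h1; rcases hBer i ω with h0 | hh
          · exact h0
          · exact absurd hh h1
      rw [hset0, prob_compl_eq_one_sub (hmeas i (measurableSet_singleton _)),
        ENNReal.toReal_sub_of_le prob_le_one ENNReal.one_ne_top, ENNReal.toReal_one,
        hset1, hpvec i]
  rw [measureReal_def, hμA, ENNReal.toReal_prod, Finset.prod_congr rfl (fun i _ => hfactor i),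
    prod_ite_split (Finset.mem_powerset.mp hS)]

end CDOaux

/-- Corollary 3.1: for independent Bernoulli random variables `X₁,…,Xₙ` with
`P(Xᵢ = 1) = pᵢ`, `Wₙ = ∑ᵢ Xᵢ`, `p = (1/n)∑ᵢ pᵢ`, `q = 1 - p`, the stop-loss distance
satisfies `d_sl(Wₙ, B_{n,p}) ≤ (2/qⁿ) ∑ᵢ |p - pᵢ| pᵢ ∏_{j≠i} (1 - p p_j)`. -/
theorem binomial_approx_independent_CDO
    {Ω : Type*} [MeasurableSpace Ω] (μ : Measure Ω) [IsProbabilityMeasure μ]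
    (n : ℕ) (X : Fin n → Ω → ℝ) (pvec : Fin n → ℝ)
    (hmeas : ∀ i, Measurable (X i))
    (hBer : ∀ i ω, X i ω = 0 ∨ X i ω = 1)
    (hpvec : ∀ i, (μ {ω | X i ω = 1}).toReal = pvec i)
    (hindep : iIndepFun X μ)
    (W : Ω → ℝ) (hW : W = fun ω => ∑ i, X i ω)
    (p q : ℝ) (hp : p = (∑ i, pvec i) / n) (hq : q = 1 - p)
    (hp0 : 0 < p) (hp1 : p < 1) :
    (⨆ z : ℝ, |(∫ ω, max (W ω - z) 0 ∂μ) - binomCallExp n p z|) ≤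
      (2 / q ^ n) *
        ∑ i, |p - pvec i| * pvec i * ∏ j ∈ Finset.univ.erase i, (1 - p * pvec j) := by
  have hn : n ≠ 0 := by
    rintro rfl
    simp only [Nat.cast_zero, div_zero] at hp
    exact lt_irrefl 0 (hp ▸ hp0)
  have hn1 : 1 ≤ n := Nat.one_le_iff_ne_zero.mpr hn
  have hncast : (0 : ℝ) < n := by exact_mod_cast Nat.pos_of_ne_zero hn
  have hsum : ∑ i, pvec i = n * p := by rw [hp]; field_simp
  have hv0 : ∀ i, 0 ≤ pvec i := fun i => (hpvec i) ▸ ENNReal.toReal_nonneg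
  have hv1 : ∀ i, pvec i ≤ 1 := fun i => by
    rw [← hpvec i]
    simpa using ENNReal.toReal_mono ENNReal.one_ne_top prob_le_one
  refine ciSup_le fun z => ?_
  have h1 : ∫ ω, max (W ω - z) 0 ∂μ = CDOaux.Ffun p pvec z 1 := by
    simp only [hW]
    exact (CDOaux.integral_call_eq μ X pvec hmeas hBer hpvec hindep z).trans
      (CDOaux.Ffun_one p pvec z).symm
  have h0 : binomCallExp n p z = CDOaux.Ffun p pvec z 0 := (CDOaux.Ffun_zero p pvec z).symm
  rw [h1, h0]
  refine (CDOaux.Ffun_diff_bound hp0.le hp1.le hv0 hv1 hsum z).trans ?_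
  exact (CDOaux.sum_bound_chain hp0.le hv0 hsum).trans
    (CDOaux.final_chain hq hp0 hp1 hv0 hv1 hn1)
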